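/- Let p ∈ (0,∞] (with 𝕜 = ℝ or ℂ), let N ≥ 2 be an integer, and let E be a 𝕜-subspace of ℓ_p such that every element of E has infinitely many zero coordinates. If x₁, …, x_N ∈ E are linearly independent, then the set {n ∈ ℕ : x₁(n) = x₂(n) = ⋯ = x_N(n) = 0} is infinite. -/
import Mathlib


open Filter
open scoped ENNReal

/-- Membership in `ℓ_p` for `p ∈ (0,∞]`: for `p = ∞` boundedness, for
`p < ∞` summability of `‖x n‖^p`. -/
def InLp {𝕜 : Type} [RCLike 𝕜] (p : ℝ≥0∞) (x : ℕ → 𝕜) : Prop :=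
  if p = ⊤ then ∃ C : ℝ, ∀ n, ‖x n‖ ≤ C
  else Summable (fun n => ‖x n‖ ^ p.toReal)

/-- Let `p ∈ (0,∞]`, `N ≥ 2`, and let `E` be a subspace of
`ℓ_p` every element of which has infinitely many zero coordinates.  If
`x₁, …, x_N ∈ E` are linearly independent, then
`{n | x₁ n = ⋯ = x_N n = 0}` is infinite. -/
theorem stmt9 {𝕜 : Type} [RCLike 𝕜] (p : ℝ≥0∞) (hp : 0 < p)
    (N : ℕ) (hN : 2 ≤ N)
    (E : Submodule 𝕜 (ℕ → 𝕜))
    (hEp : (↑E : Set (ℕ → 𝕜)) ⊆ {x | InLp p x})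
    (hEz : ∀ x ∈ E, {n : ℕ | x n = 0}.Infinite)
    (x : Fin N → (ℕ → 𝕜)) (hxE : ∀ i, x i ∈ E)
    (hind : LinearIndependent 𝕜 x) :
    {n : ℕ | ∀ i, x i n = 0}.Infinite := by
  by_contra hfin
  rw [Set.not_infinite] at hfin
  set S : Set ℕ := {n : ℕ | ∀ i, x i n = 0} with hS
  have hy : ∀ t : 𝕜, (∑ i : Fin N, t ^ (i : ℕ) • x i) ∈ E :=
    fun t => Submodule.sum_mem _ fun i _ => Submodule.smul_mem _ _ (hxE i)
  have hz : ∀ t : 𝕜, ({n | (∑ i : Fin N, t ^ (i : ℕ) • x i) n = 0} \ S).Infinite :=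
    fun t => (hEz _ (hy t)).diff hfin
  choose f hf using fun t => (hz t).nonempty
  have hfib : ∀ n : ℕ, (f ⁻¹' {n}).Finite := by
    intro n
    by_cases hn : n ∈ S
    · have he : f ⁻¹' {n} = ∅ := by
        ext t
        simp only [Set.mem_preimage, Set.mem_singleton_iff, Set.mem_empty_iff_false, iff_false]
        intro h
        exact (hf t).2 (h ▸ hn)
      simp [he]
    · obtain ⟨i₀, hi₀⟩ : ∃ i, x i n ≠ 0 := by
        by_contra h
        push_neg at h
        exact hn h
      set P : Polynomial 𝕜 := ∑ i : Fin N, Polynomial.monomial (i : ℕ) (x i n) with hPdef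
      have hP : P ≠ 0 := by
        intro h
        have hc := congrArg (fun q => Polynomial.coeff q (i₀ : ℕ)) h
        simp only [hPdef, Polynomial.finset_sum_coeff, Polynomial.coeff_monomial,
          Polynomial.coeff_zero] at hc
        rw [Finset.sum_eq_single i₀] at hc
        · simp at hc; exact hi₀ hc
        · intro b _ hb
          have : (b : ℕ) ≠ (i₀ : ℕ) := fun hh => hb (Fin.ext hh)
          simp [this]
        · simp
      apply Set.Finite.subset (Polynomial.finite_setOf_isRoot hP)
      intro t ht
      simp only [Set.mem_preimage, Set.mem_singleton_iff] at ht
      have h0 : (∑ i : Fin N, t ^ (i : ℕ) • x i) n = 0 := by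
        have := (hf t).1
        rw [ht] at this
        exact this
      have hsum : (∑ i : Fin N, t ^ (i : ℕ) • x i) n = ∑ i : Fin N, t ^ (i : ℕ) * x i n := by
        simp [Finset.sum_apply]
      show Polynomial.IsRoot P t
      unfold Polynomial.IsRoot
      rw [hPdef, Polynomial.eval_finset_sum]
      simp only [Polynomial.eval_monomial]
      rw [hsum] at h0
      rw [← h0]
      exact Finset.sum_congr rfl fun i _ => mul_comm _ _
  have hcount : (Set.univ : Set 𝕜).Countable := by
    have hsub : (Set.univ : Set 𝕜) ⊆ ⋃ n : ℕ, f ⁻¹' {n} :=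
      fun t _ => Set.mem_iUnion.2 ⟨f t, rfl⟩
    exact Set.Countable.mono hsub (Set.countable_iUnion fun n => (hfib n).countable)
  have : Uncountable 𝕜 := (RCLike.ofReal_injective (K := 𝕜)).uncountable
  exact (Set.not_countable_univ_iff.mpr this) hcount
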